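/- Let 0 < γ < 1, N ≥ 1, 1 ≤ n ≤ N, and T_t := Σ_{s=1}^{N} γ^{|s−n|} γ^{|s−t−n|}. Then for all integers t with t ≥ N − n, T_{t+1} = γ·T_t, and for all 0 ≤ t < N − n, T_{t+1} ≤ γ·T_t + γ^{t+1}. -/

import Mathlib

open Finset

/-- Recursions for `T_t := Σ_{s=1}^{N} γ^{|s−n|} γ^{|s−t−n|}`: for `t ≥ N − n`,
`T_{t+1} = γ·T_t`, and for `0 ≤ t < N − n, T_{t+1} ≤ γ·T_t + γ^{t+1}`. -/
theorem T_recursion_upper (γ : ℝ) (hγ0 : 0 < γ) (hγ1 : γ < 1)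
    (N n : ℤ) (hN : 1 ≤ N) (hn1 : 1 ≤ n) (hnN : n ≤ N)
    (T : ℤ → ℝ)
    (hT : ∀ t : ℤ, T t = ∑ s ∈ Finset.Icc (1 : ℤ) N, γ ^ (s - n).natAbs * γ ^ (s - t - n).natAbs) :
    (∀ t : ℤ, N - n ≤ t → T (t + 1) = γ * T t) ∧
    (∀ t : ℤ, 0 ≤ t → t < N - n → T (t + 1) ≤ γ * T t + γ ^ (t + 1).toNat) := by
  constructor
  · intro t ht
    rw [hT, hT, Finset.mul_sum]
    apply Finset.sum_congr rfl
    intro s hs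
    simp only [Finset.mem_Icc] at hs
    have h1 : (s - (t + 1) - n).natAbs = (s - t - n).natAbs + 1 := by omega
    rw [h1, pow_succ]
    ring
  · intro t ht0 ht
    set h : ℤ → ℝ := fun s =>
      if t + n < s then γ ^ (t + 1).toNat * ((1 - γ ^ 2) * (γ ^ 2) ^ (s - t - n - 1).toNat)
      else 0 with hh
    have key : ∀ s ∈ Finset.Icc (1 : ℤ) N,
        γ ^ (s - n).natAbs * γ ^ (s - (t + 1) - n).natAbs
          = γ * (γ ^ (s - n).natAbs * γ ^ (s - t - n).natAbs) + h s := by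
      intro s hs
      simp only [Finset.mem_Icc] at hs
      by_cases hc : t + n < s
      · have e1 : (s - n).natAbs = (t + 1).toNat + (s - t - n - 1).toNat := by omega
        have e2 : (s - t - n).natAbs = (s - t - n - 1).toNat + 1 := by omega
        have e3 : (s - (t + 1) - n).natAbs = (s - t - n - 1).toNat := by omega
        rw [hh]
        simp only [if_pos hc]
        rw [e1, e2, e3]
        generalize (t + 1).toNat = A
        generalize (s - t - n - 1).toNat = K
        rw [pow_add, pow_succ, sq, mul_pow]
        ring
      · have e1 : (s - (t + 1) - n).natAbs = (s - t - n).natAbs + 1 := by omega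
        rw [hh]
        simp only [if_neg hc]
        rw [e1, pow_succ]
        ring
    rw [hT, hT]
    rw [Finset.sum_congr rfl key, Finset.sum_add_distrib, ← Finset.mul_sum]
    apply add_le_add le_rfl
    -- bound Σ h ≤ γ^(t+1).toNat
    have hIcc : Finset.Icc (1 : ℤ) N = Finset.Ioc (0 : ℤ) N := by
      ext x; simp [Int.lt_iff_add_one_le]
    have hunion : Finset.Ioc (0:ℤ) N = Finset.Ioc 0 (t + n) ∪ Finset.Ioc (t + n) N :=
      (Finset.Ioc_union_Ioc_eq_Ioc (by omega) (by omega)).symm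
    have hdisj : Disjoint (Finset.Ioc (0:ℤ) (t + n)) (Finset.Ioc (t + n) N) := by
      rw [Finset.disjoint_left]
      intro a ha hb
      simp only [Finset.mem_Ioc] at ha hb
      omega
    have hsplit : ∑ s ∈ Finset.Ioc (0:ℤ) (t + n), h s + ∑ s ∈ Finset.Ioc (t + n) N, h s
        = ∑ s ∈ Finset.Ioc (0:ℤ) N, h s := by
      rw [hunion, Finset.sum_union hdisj]
    have hzero : ∑ s ∈ Finset.Ioc (0 : ℤ) (t + n), h s = 0 := by
      apply Finset.sum_eq_zero
      intro s hs
      simp only [Finset.mem_Ioc] at hs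
      rw [hh]
      simp only [if_neg (by omega : ¬ t + n < s)]
    set M : ℕ := (N - t - n).toNat with hM
    have hre : ∑ s ∈ Finset.Ioc (t + n) N, h s
        = ∑ j ∈ Finset.range M, γ ^ (t + 1).toNat * ((1 - γ ^ 2) * (γ ^ 2) ^ j) := by
      apply Finset.sum_nbij' (fun s => (s - t - n - 1).toNat) (fun j => t + n + 1 + (j : ℤ))
      · intro s hs
        simp only [Finset.mem_Ioc] at hs
        simp only [Finset.mem_range]
        omega
      · intro j hj
        simp only [Finset.mem_range] at hj
        simp only [Finset.mem_Ioc]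
        omega
      · intro s hs
        simp only [Finset.mem_Ioc] at hs
        omega
      · intro j hj
        simp only [Finset.mem_range] at hj
        omega
      · intro s hs
        simp only [Finset.mem_Ioc] at hs
        rw [hh]
        simp only [if_pos (by omega : t + n < s)]
    rw [hIcc, ← hsplit, hzero, zero_add, hre, ← Finset.mul_sum, ← Finset.mul_sum]
    have hgeom : (1 - γ ^ 2) * ∑ j ∈ Finset.range M, (γ ^ 2) ^ j = 1 - (γ ^ 2) ^ M := by
      have := geom_sum_mul (γ ^ 2) M
      nlinarith [this]
    rw [hgeom]
    have hpow : (0:ℝ) < (γ ^ 2) ^ M := by positivity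
    have hγpow : (0:ℝ) < γ ^ (t + 1).toNat := by positivity
    nlinarith
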